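/- For any $x, y \in \mathbb{C}$ with $x \neq 0$ and $w := (x^2 y - x^2 + 1)(x^2 y + (x^2-1)^2) \neq 0$, setting $z$ to be a square root of $x^2(1 - x^2 - y)/w$, the matrices $A = \begin{pmatrix} x & 1 \\ 0 & 1/x \end{pmatrix}$, $B = \begin{pmatrix} x & 0 \\ y & 1/x \end{pmatrix}$, $C = \begin{pmatrix} -\frac{x(x^2 y^2 + x^2(x^2-3)y - (x^2-1)^2)}{zw} & z \\ zy & \frac{z(1-x^2)}{x} \end{pmatrix}$ in $\mathrm{SL}_2(\mathbb{C})$ satisfy the Whitehead link group relations $AC = CB$ and $CABA^{-1} = AB^{-1}ABA^{-1}C$. -/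

import Mathlib

open Matrix

set_option maxHeartbeats 1600000 in
/-- The two-parameter family of representations of the Whitehead link group:
for `x, y ∈ ℂ` with the stated nondegeneracy conditions and `z` a square root
of `x²(1-x²-y)/w`, where `w = (x²y - x² + 1)(x²y + (x²-1)²)`, the matrices
`A, B, C` lie in `SL₂(ℂ)` and satisfy the Whitehead link group relations
`AC = CB` and `CABA⁻¹ = AB⁻¹ABA⁻¹C`. -/
theorem whitehead_representation (x y z w : ℂ) (hx : x ≠ 0)
    (hw : w = (x ^ 2 * y - x ^ 2 + 1) * (x ^ 2 * y + (x ^ 2 - 1) ^ 2))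
    (hw0 : w ≠ 0) (hxy : 1 - x ^ 2 - y ≠ 0)
    (hz : z ^ 2 = x ^ 2 * (1 - x ^ 2 - y) / w) :
    let A : Matrix (Fin 2) (Fin 2) ℂ := !![x, 1; 0, 1 / x]
    let B : Matrix (Fin 2) (Fin 2) ℂ := !![x, 0; y, 1 / x]
    let C : Matrix (Fin 2) (Fin 2) ℂ :=
      !![-(x * (x ^ 2 * y ^ 2 + x ^ 2 * (x ^ 2 - 3) * y - (x ^ 2 - 1) ^ 2)) / (z * w), z;
         z * y, z * (1 - x ^ 2) / x]
    A.det = 1 ∧ B.det = 1 ∧ C.det = 1 ∧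
    A * C = C * B ∧
    C * A * B * A⁻¹ = A * B⁻¹ * A * B * A⁻¹ * C := by
  intro A B C
  have hz2 : z ^ 2 * w = x ^ 2 * (1 - x ^ 2 - y) := by
    field_simp at hz; exact hz
  have hz0 : z ≠ 0 := by
    intro h
    have h0 : x ^ 2 * (1 - x ^ 2 - y) = 0 := by rw [← hz2, h]; ring
    rcases mul_eq_zero.mp h0 with h' | h'
    · exact hx (pow_eq_zero_iff two_ne_zero |>.mp h')
    · exact hxy h'
  have hAinv : A⁻¹ = !![1 / x, -1; 0, x] := by
    apply Matrix.inv_eq_right_inv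
    show A * _ = 1
    simp only [A]
    ext i j
    fin_cases i <;> fin_cases j <;>
      simp [Matrix.mul_apply, Fin.sum_univ_two] <;> field_simp
  have hBinv : B⁻¹ = !![1 / x, 0; -y, x] := by
    apply Matrix.inv_eq_right_inv
    show B * _ = 1
    simp only [B]
    ext i j
    fin_cases i <;> fin_cases j <;>
      simp [Matrix.mul_apply, Fin.sum_univ_two] <;> field_simp <;> ring
  set D : Matrix (Fin 2) (Fin 2) ℂ :=
    !![-(x * (x ^ 2 * y ^ 2 + x ^ 2 * (x ^ 2 - 3) * y - (x ^ 2 - 1) ^ 2)) /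
        (x ^ 2 * (1 - x ^ 2 - y)), 1;
       y, (1 - x ^ 2) / x] with hD
  have hne : x ^ 2 * (1 - x ^ 2 - y) ≠ 0 := mul_ne_zero (pow_ne_zero 2 hx) hxy
  have hC : C = z • D := by
    simp only [C, hD]
    ext i j
    fin_cases i <;> fin_cases j <;> simp [Matrix.smul_apply]
    · rw [← hz2]
      field_simp
    · field_simp
  have hdetD : D.det = w / (x ^ 2 * (1 - x ^ 2 - y)) := by
    simp only [hD, Matrix.det_fin_two_of]
    rw [hw]
    field_simp
    ring
  have hc : x ^ 3 * (1 - x ^ 2 - y) ≠ 0 := mul_ne_zero (pow_ne_zero 3 hx) hxy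
  have hE : (x ^ 3 * (1 - x ^ 2 - y)) • D =
      !![-(x ^ 2 * (x ^ 2 * y ^ 2 + x ^ 2 * (x ^ 2 - 3) * y - (x ^ 2 - 1) ^ 2)),
         x ^ 3 * (1 - x ^ 2 - y);
         x ^ 3 * (1 - x ^ 2 - y) * y, x ^ 2 * (1 - x ^ 2 - y) * (1 - x ^ 2)] := by
    simp only [hD]
    ext i j
    fin_cases i <;> fin_cases j <;>
      simp only [Matrix.smul_apply, Matrix.cons_val', Matrix.cons_val_zero, Matrix.cons_val_one,
        Matrix.head_cons, Matrix.head_fin_const, Matrix.empty_val', Matrix.cons_val_fin_one,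
        Matrix.of_apply, smul_eq_mul, Fin.isValue, Fin.zero_eta, Fin.mk_one] <;> field_simp <;> ring
  have hs4 : x ^ 4 * (1 - x ^ 2 - y) ≠ 0 := mul_ne_zero (pow_ne_zero 4 hx) hxy
  have hs8 : x ^ 8 * (1 - x ^ 2 - y) ≠ 0 := mul_ne_zero (pow_ne_zero 8 hx) hxy
  set E : Matrix (Fin 2) (Fin 2) ℂ :=
    !![-(x ^ 2 * (x ^ 2 * y ^ 2 + x ^ 2 * (x ^ 2 - 3) * y - (x ^ 2 - 1) ^ 2)),
       x ^ 3 * (1 - x ^ 2 - y);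
       x ^ 3 * (1 - x ^ 2 - y) * y, x ^ 2 * (1 - x ^ 2 - y) * (1 - x ^ 2)] with hEdef
  set Ap : Matrix (Fin 2) (Fin 2) ℂ := !![x ^ 2, x; 0, 1] with hApdef
  set Bp : Matrix (Fin 2) (Fin 2) ℂ := !![x ^ 2, 0; x * y, 1] with hBpdef
  set Ai : Matrix (Fin 2) (Fin 2) ℂ := !![1, -x; 0, x ^ 2] with hAidef
  set Bi : Matrix (Fin 2) (Fin 2) ℂ := !![1, 0; -(x * y), x ^ 2] with hBidef
  have hE : (x ^ 3 * (1 - x ^ 2 - y)) • D = E := by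
    simp only [hD, hEdef]
    ext i j
    fin_cases i <;> fin_cases j <;>
      simp only [Matrix.smul_apply, Matrix.cons_val', Matrix.cons_val_zero, Matrix.cons_val_one,
        Matrix.head_cons, Matrix.head_fin_const, Matrix.empty_val', Matrix.cons_val_fin_one,
        Matrix.of_apply, smul_eq_mul, Fin.isValue, Fin.zero_eta, Fin.mk_one] <;> field_simp <;> ring
  have hAp : (x • A : Matrix (Fin 2) (Fin 2) ℂ) = Ap := by
    simp only [A, hApdef]
    ext i j
    fin_cases i <;> fin_cases j <;>
      simp only [Matrix.smul_apply, Matrix.cons_val', Matrix.cons_val_zero, Matrix.cons_val_one,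
        Matrix.head_cons, Matrix.head_fin_const, Matrix.empty_val', Matrix.cons_val_fin_one,
        Matrix.of_apply, smul_eq_mul, Fin.isValue, Fin.zero_eta, Fin.mk_one] <;> field_simp <;> ring
  have hBp : (x • B : Matrix (Fin 2) (Fin 2) ℂ) = Bp := by
    simp only [B, hBpdef]
    ext i j
    fin_cases i <;> fin_cases j <;>
      simp only [Matrix.smul_apply, Matrix.cons_val', Matrix.cons_val_zero, Matrix.cons_val_one,
        Matrix.head_cons, Matrix.head_fin_const, Matrix.empty_val', Matrix.cons_val_fin_one,
        Matrix.of_apply, smul_eq_mul, Fin.isValue, Fin.zero_eta, Fin.mk_one] <;> field_simp <;> ring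
  have hAi : (x • A⁻¹ : Matrix (Fin 2) (Fin 2) ℂ) = Ai := by
    rw [hAinv]
    simp only [hAidef]
    ext i j
    fin_cases i <;> fin_cases j <;>
      simp only [Matrix.smul_apply, Matrix.cons_val', Matrix.cons_val_zero, Matrix.cons_val_one,
        Matrix.head_cons, Matrix.head_fin_const, Matrix.empty_val', Matrix.cons_val_fin_one,
        Matrix.of_apply, smul_eq_mul, Fin.isValue, Fin.zero_eta, Fin.mk_one] <;> field_simp <;> ring
  have hBi : (x • B⁻¹ : Matrix (Fin 2) (Fin 2) ℂ) = Bi := by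
    rw [hBinv]
    simp only [hBidef]
    ext i j
    fin_cases i <;> fin_cases j <;>
      simp only [Matrix.smul_apply, Matrix.cons_val', Matrix.cons_val_zero, Matrix.cons_val_one,
        Matrix.head_cons, Matrix.head_fin_const, Matrix.empty_val', Matrix.cons_val_fin_one,
        Matrix.of_apply, smul_eq_mul, Fin.isValue, Fin.zero_eta, Fin.mk_one] <;> field_simp <;> ring
  have main2 : Ap * E = E * Bp := by
    simp only [hApdef, hBpdef, hEdef, Matrix.mul_fin_two]
    ext i j
    fin_cases i <;> fin_cases j <;>
      simp only [Matrix.cons_val', Matrix.cons_val_zero, Matrix.cons_val_one, Matrix.head_cons,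
        Matrix.head_fin_const, Matrix.empty_val', Matrix.cons_val_fin_one, Matrix.of_apply,
        Fin.isValue] <;> ring
  have main : x ^ 2 • (E * Ap * Bp * Ai) = Ap * Bi * Ap * Bp * Ai * E := by
    simp only [hApdef, hBpdef, hAidef, hBidef, hEdef, Matrix.mul_fin_two, Matrix.smul_of,
      Matrix.smul_cons, smul_eq_mul, Matrix.smul_empty]
    ext i j
    fin_cases i <;> fin_cases j <;>
      simp only [Matrix.cons_val', Matrix.cons_val_zero, Matrix.cons_val_one,
        Matrix.head_cons, Matrix.head_fin_const, Matrix.empty_val', Matrix.cons_val_fin_one,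
        Matrix.of_apply, Fin.isValue] <;> ring
  refine ⟨?_, ?_, ?_, ?_, ?_⟩
  · simp only [A, Matrix.det_fin_two_of]; field_simp; norm_num
  · simp only [B, Matrix.det_fin_two_of]; field_simp; norm_num
  · rw [hC, Matrix.det_smul, hdetD, Fintype.card_fin, ← hz2]
    field_simp
  · rw [hC, Matrix.mul_smul, Matrix.smul_mul]
    congr 1
    apply smul_right_injective (Matrix (Fin 2) (Fin 2) ℂ) hs4
    beta_reduce
    calc (x ^ 4 * (1 - x ^ 2 - y)) • (A * D)
        = (x • A) * ((x ^ 3 * (1 - x ^ 2 - y)) • D) := by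
          simp only [Matrix.smul_mul, Matrix.mul_smul, smul_smul]
          congr 1
          ring
      _ = Ap * E := by rw [hAp, hE]
      _ = E * Bp := main2
      _ = ((x ^ 3 * (1 - x ^ 2 - y)) • D) * (x • B) := by rw [hBp, hE]
      _ = (x ^ 4 * (1 - x ^ 2 - y)) • (D * B) := by
          simp only [Matrix.smul_mul, Matrix.mul_smul, smul_smul]
          congr 1
          ring
  · rw [hC, Matrix.smul_mul, Matrix.smul_mul, Matrix.smul_mul, Matrix.mul_smul]
    congr 1
    apply smul_right_injective (Matrix (Fin 2) (Fin 2) ℂ) hs8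
    beta_reduce
    calc (x ^ 8 * (1 - x ^ 2 - y)) • (D * A * B * A⁻¹)
        = x ^ 2 • (((x ^ 3 * (1 - x ^ 2 - y)) • D) * (x • A) * (x • B) * (x • A⁻¹)) := by
          simp only [Matrix.smul_mul, Matrix.mul_smul, smul_smul]
          congr 1
          ring
      _ = x ^ 2 • (E * Ap * Bp * Ai) := by rw [hAp, hBp, hAi, hE]
      _ = Ap * Bi * Ap * Bp * Ai * E := main
      _ = (x • A) * (x • B⁻¹) * (x • A) * (x • B) * (x • A⁻¹) *
            ((x ^ 3 * (1 - x ^ 2 - y)) • D) := by rw [hAp, hBp, hAi, hBi, hE]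
      _ = (x ^ 8 * (1 - x ^ 2 - y)) • (A * B⁻¹ * A * B * A⁻¹ * D) := by
          simp only [Matrix.smul_mul, Matrix.mul_smul, smul_smul]
          congr 1
          ring
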